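/- Let Ω ⊆ ℝ² be a bounded open convex set containing the origin, and let σ, Λ and the lacunary maximal operator 𝓜 be as defined below. Let 1 ≤ q < ∞ and suppose there is B > 0 such that ‖𝓜f‖_{L^q(ℝ²)} ≤ B‖f‖_{L^q(ℝ²)} for every continuous compactly supported f : ℝ² → ℂ. Then there exist constants c > 0 and δ₁ > 0, depending only on Ω and q, such that sup_{θ ∈ S¹} (∫₀^{δ₁} Λ(θ,δ)^q δ^{-1} dδ)^{1/q} ≤ c^{-1} B. -/

import Mathlib

open MeasureTheory Set
open scoped ENNReal

/-- The support function `h_Ω(θ) = sup_{z ∈ Ω} ⟨z, θ⟩`. -/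
noncomputable def suppFn (Ω : Set (EuclideanSpace ℝ (Fin 2)))
    (θ : EuclideanSpace ℝ (Fin 2)) : ℝ :=
  sSup ((fun z => (inner ℝ z θ : ℝ)) '' Ω)

/-- The cap `C⁺(θ,δ) = {y ∈ ∂Ω : ⟨y,θ⟩ ≥ h_Ω(θ) − δ}`; the cap
`C⁻(θ,δ)` is `capPlus Ω (-θ) δ`. -/
def capPlus (Ω : Set (EuclideanSpace ℝ (Fin 2)))
    (θ : EuclideanSpace ℝ (Fin 2)) (δ : ℝ) : Set (EuclideanSpace ℝ (Fin 2)) :=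
  {y | y ∈ frontier Ω ∧ suppFn Ω θ - δ ≤ (inner ℝ y θ : ℝ)}

/-- Arclength measure `σ` on `∂Ω`: one-dimensional Hausdorff measure
restricted to the frontier of `Ω`. -/
noncomputable def bdyMeasure (Ω : Set (EuclideanSpace ℝ (Fin 2))) :
    Measure (EuclideanSpace ℝ (Fin 2)) :=
  (μH[1] : Measure (EuclideanSpace ℝ (Fin 2))).restrict (frontier Ω)

/-- `Λ(θ,δ) = max(σ(C⁺(θ,δ)), σ(C⁻(θ,δ)))`. -/
noncomputable def capLen (Ω : Set (EuclideanSpace ℝ (Fin 2)))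
    (θ : EuclideanSpace ℝ (Fin 2)) (δ : ℝ) : ℝ≥0∞ :=
  max (bdyMeasure Ω (capPlus Ω θ δ)) (bdyMeasure Ω (capPlus Ω (-θ) δ))

/-- The lacunary maximal function `𝓜f(x) = sup_{k ∈ ℤ} |∫_{∂Ω} f(x − 2^k y) dσ(y)|`. -/
noncomputable def lacMax (Ω : Set (EuclideanSpace ℝ (Fin 2)))
    (f : EuclideanSpace ℝ (Fin 2) → ℂ) (x : EuclideanSpace ℝ (Fin 2)) : ℝ≥0∞ :=
  ⨆ k : ℤ, (‖∫ y, f (x - (2:ℝ)^k • y) ∂(bdyMeasure Ω)‖₊ : ℝ≥0∞)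

section AuxForStmt1
open Metric Real
open scoped RealInnerProductSpace NNReal

private abbrev E2 := EuclideanSpace ℝ (Fin 2)

private lemma aux_basis (θ : E2) (hθ : ‖θ‖ = 1) :
    ∃ b : OrthonormalBasis (Fin 2) ℝ E2, b 0 = θ := by
  have hsum : θ 0 ^ 2 + θ 1 ^ 2 = 1 := by
    have h := hθ
    rw [EuclideanSpace.norm_eq] at h
    have h2 : Real.sqrt (∑ i : Fin 2, ‖θ i‖ ^ 2) = 1 := h
    have h3 : (∑ i : Fin 2, ‖θ i‖ ^ 2) = 1 := by
      have hnn : (0:ℝ) ≤ ∑ i : Fin 2, ‖θ i‖ ^ 2 := by positivity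
      nlinarith [Real.sq_sqrt hnn]
    simpa [Fin.sum_univ_two, Real.norm_eq_abs, sq_abs] using h3
  set θ' : E2 := (WithLp.equiv 2 (Fin 2 → ℝ)).symm ![-(θ 1), θ 0] with hθ'
  have hθ'0 : θ' 0 = -(θ 1) := rfl
  have hθ'1 : θ' 1 = θ 0 := rfl
  have hθ'n : ‖θ'‖ = 1 := by
    rw [EuclideanSpace.norm_eq, Fin.sum_univ_two, hθ'0, hθ'1, Real.norm_eq_abs, Real.norm_eq_abs,
      sq_abs, sq_abs, neg_sq, add_comm, hsum, Real.sqrt_one]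
  set v : Fin 2 → E2 := ![θ, θ'] with hv
  have hon : Orthonormal ℝ v := by
    rw [orthonormal_iff_ite]
    intro i j
    fin_cases i <;> fin_cases j <;>
      simp [v, PiLp.inner_apply, Fin.sum_univ_two, hθ'0, hθ'1, RCLike.inner_apply, hθ, hθ'n] <;>
      ring_nf <;> nlinarith [hsum]
  have hcard : Fintype.card (Fin 2) = Module.finrank ℝ E2 := by
    simp [finrank_euclideanSpace_fin]
  let b0 := basisOfLinearIndependentOfCardEqFinrank hon.linearIndependent hcard
  have hb0 : ⇑b0 = v := coe_basisOfLinearIndependentOfCardEqFinrank _ _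
  refine ⟨b0.toOrthonormalBasis (by rwa [hb0]), ?_⟩
  rw [Module.Basis.coe_toOrthonormalBasis, hb0]
  rfl

private lemma aux_meas_eval (i : Fin 2) : Measurable (fun v : EuclideanSpace ℝ (Fin 2) => v i) := by
  have : Continuous (fun v : EuclideanSpace ℝ (Fin 2) => v i) := by
    exact (EuclideanSpace.proj i).continuous
  exact this.measurable

lemma aux_volume_box (b : OrthonormalBasis (Fin 2) ℝ E2) {I J : Set ℝ}
    (hI : MeasurableSet I) (hJ : MeasurableSet J) :
    volume {x : E2 | b.repr x 0 ∈ I ∧ b.repr x 1 ∈ J} = volume I * volume J := by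
  have hmp := b.measurePreserving_repr
  have hset : {x : E2 | b.repr x 0 ∈ I ∧ b.repr x 1 ∈ J}
      = b.repr ⁻¹' {v : EuclideanSpace ℝ (Fin 2) | v 0 ∈ I ∧ v 1 ∈ J} := rfl
  have hmeas2 : MeasurableSet {v : EuclideanSpace ℝ (Fin 2) | v 0 ∈ I ∧ v 1 ∈ J} :=
    ((aux_meas_eval 0) hI).inter ((aux_meas_eval 1) hJ)
  rw [hset, hmp.measure_preimage hmeas2.nullMeasurableSet]
  have hmp2 := EuclideanSpace.volume_preserving_symm_measurableEquiv_toLp (Fin 2)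
  have hset2 : {v : EuclideanSpace ℝ (Fin 2) | v 0 ∈ I ∧ v 1 ∈ J}
      = ((MeasurableEquiv.toLp 2 (Fin 2 → ℝ)).symm) ⁻¹' (Set.univ.pi ![I, J]) := by
    ext v
    simp [Set.mem_pi, Fin.forall_fin_two]
  rw [hset2, hmp2.measure_preimage ?hm]
  · rw [volume_pi_pi]
    simp [Fin.prod_univ_two]
  · refine (MeasurableSet.univ_pi ?_).nullMeasurableSet
    intro i; fin_cases i <;> simpa

private lemma aux_norm_le (b : OrthonormalBasis (Fin 2) ℝ E2) (x : E2) :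
    ‖x‖ ≤ |b.repr x 0| + |b.repr x 1| := by
  have h1 : ‖x‖ = ‖b.repr x‖ := (b.repr.norm_map x).symm
  rw [h1, EuclideanSpace.norm_eq]
  have h2 : (∑ i : Fin 2, ‖b.repr x i‖ ^ 2)
      = |b.repr x 0| ^ 2 + |b.repr x 1| ^ 2 := by
    simp [Fin.sum_univ_two, Real.norm_eq_abs]
  rw [h2]
  have h3 : |b.repr x 0| ^ 2 + |b.repr x 1| ^ 2 ≤ (|b.repr x 0| + |b.repr x 1|) ^ 2 := by
    nlinarith [abs_nonneg (b.repr x 0), abs_nonneg (b.repr x 1)]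
  calc Real.sqrt (|b.repr x 0| ^ 2 + |b.repr x 1| ^ 2)
      ≤ Real.sqrt ((|b.repr x 0| + |b.repr x 1|) ^ 2) := Real.sqrt_le_sqrt h3
    _ = |b.repr x 0| + |b.repr x 1| := by
        rw [Real.sqrt_sq (by positivity)]

private lemma aux_inner_expand (x y z w : E2) :
    ⟪x - y, z - w⟫ = ⟪x,z⟫ - ⟪x,w⟫ - ⟪y,z⟫ + ⟪y,w⟫ := by
  simp [inner_sub_left, inner_sub_right]; ring

lemma aux_exists_proj {K : Set E2} (hK : Convex ℝ K) (hcl : IsClosed K)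
    (hne : K.Nonempty) (u : E2) :
    ∃ v, v ∈ K ∧ ∀ w ∈ K, ⟪u - v, w - v⟫ ≤ 0 := by
  obtain ⟨v, hv, heq⟩ := exists_norm_eq_iInf_of_complete_convex hne hcl.isComplete hK u
  exact ⟨v, hv, (norm_eq_iInf_iff_real_inner_le_zero hK hv).1 heq⟩

lemma aux_proj_unique {K : Set E2} {u a z : E2} (ha : a ∈ K) (hz : z ∈ K)
    (h1 : ∀ w ∈ K, ⟪u - a, w - a⟫ ≤ 0) (h2 : ∀ w ∈ K, ⟪u - z, w - z⟫ ≤ 0) :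
    a = z := by
  have e1 := h1 z hz
  have e2 := h2 a ha
  rw [aux_inner_expand] at e1 e2
  have key : ⟪z - a, z - a⟫ ≤ 0 := by
    rw [aux_inner_expand]
    have := real_inner_comm a z
    linarith
  have : z - a = 0 := by
    have := real_inner_self_nonpos.1 key
    exact this
  have : z = a := by rwa [sub_eq_zero] at this
  exact this.symm

lemma aux_proj_lip {K : Set E2} {u v a b : E2}
    (h1 : ∀ w ∈ K, ⟪u - a, w - a⟫ ≤ 0) (h2 : ∀ w ∈ K, ⟪v - b, w - b⟫ ≤ 0)
    (ha : a ∈ K) (hb : b ∈ K) : ‖a - b‖ ≤ ‖u - v‖ := by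
  have e1 := h1 b hb
  have e2 := h2 a ha
  rw [aux_inner_expand] at e1 e2
  have key : ⟪a - b, a - b⟫ ≤ ⟪u - v, a - b⟫ := by
    rw [aux_inner_expand, aux_inner_expand]
    have c1 := real_inner_comm a b
    have c2 := real_inner_comm u a
    have c3 := real_inner_comm u b
    have c4 := real_inner_comm v a
    have c5 := real_inner_comm v b
    linarith
  have hcs : ⟪u - v, a - b⟫ ≤ ‖u - v‖ * ‖a - b‖ := real_inner_le_norm _ _
  have hsq : ⟪a - b, a - b⟫ = ‖a - b‖ ^ 2 := real_inner_self_eq_norm_sq _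
  rcases eq_or_lt_of_le (norm_nonneg (a - b)) with h0 | h0
  · rw [← h0]; exact norm_nonneg _
  · nlinarith

private lemma aux_lip_cos : LipschitzWith 1 Real.cos := by
  apply lipschitzWith_of_nnnorm_deriv_le Real.differentiable_cos
  intro x
  rw [Real.deriv_cos]
  have : ‖-Real.sin x‖ ≤ 1 := by rw [norm_neg, Real.norm_eq_abs]; exact Real.abs_sin_le_one x
  exact_mod_cast this

lemma aux_lip_sin : LipschitzWith 1 Real.sin := by
  apply lipschitzWith_of_nnnorm_deriv_le Real.differentiable_sin
  intro x
  rw [Real.deriv_sin]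
  have : ‖Real.cos x‖ ≤ 1 := by rw [Real.norm_eq_abs]; exact Real.abs_cos_le_one x
  exact_mod_cast this

noncomputable def circMap (ρ : ℝ) (t : ℝ) : E2 := (WithLp.equiv 2 (Fin 2 → ℝ)).symm ![ρ * Real.cos t, ρ * Real.sin t]

lemma circMap_apply0 (ρ t : ℝ) : circMap ρ t 0 = ρ * Real.cos t := rfl
lemma circMap_apply1 (ρ t : ℝ) : circMap ρ t 1 = ρ * Real.sin t := rfl

lemma aux_circ_lip {ρ : ℝ} (hρ : 0 ≤ ρ) : LipschitzWith (Real.toNNReal (2 * ρ)) (circMap ρ) := by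
  apply LipschitzWith.of_dist_le_mul
  intro s t
  rw [EuclideanSpace.dist_eq]
  have hc : |Real.cos s - Real.cos t| ≤ |s - t| := by
    have := aux_lip_cos.dist_le_mul s t
    simpa [Real.dist_eq] using this
  have hs : |Real.sin s - Real.sin t| ≤ |s - t| := by
    have := aux_lip_sin.dist_le_mul s t
    simpa [Real.dist_eq] using this
  have e0 : circMap ρ s 0 - circMap ρ t 0 = ρ * (Real.cos s - Real.cos t) := by
    rw [circMap_apply0, circMap_apply0]; ring
  have e1 : circMap ρ s 1 - circMap ρ t 1 = ρ * (Real.sin s - Real.sin t) := by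
    rw [circMap_apply1, circMap_apply1]; ring
  have hsum : (∑ i : Fin 2, dist (circMap ρ s i) (circMap ρ t i) ^ 2)
      = (ρ * (Real.cos s - Real.cos t))^2 + (ρ * (Real.sin s - Real.sin t))^2 := by
    simp [Fin.sum_univ_two, Real.dist_eq, e0, e1, sq_abs]
  rw [hsum]
  have hb : (ρ * (Real.cos s - Real.cos t))^2 + (ρ * (Real.sin s - Real.sin t))^2
      ≤ (2 * ρ * |s - t|) ^ 2 := by
    have h1 : (ρ * (Real.cos s - Real.cos t))^2 ≤ ρ^2 * (s-t)^2 := by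
      have := sq_le_sq' (neg_le_of_abs_le hc) (le_of_abs_le hc)
      have h2 : (Real.cos s - Real.cos t)^2 ≤ (s-t)^2 := by
        calc (Real.cos s - Real.cos t)^2 = |Real.cos s - Real.cos t|^2 := (sq_abs _).symm
          _ ≤ |s - t|^2 := by nlinarith [abs_nonneg (Real.cos s - Real.cos t), abs_nonneg (s - t)]
          _ = (s-t)^2 := sq_abs _
      nlinarith [sq_nonneg ρ]
    have h2 : (ρ * (Real.sin s - Real.sin t))^2 ≤ ρ^2 * (s-t)^2 := by
      have h2 : (Real.sin s - Real.sin t)^2 ≤ (s-t)^2 := by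
        calc (Real.sin s - Real.sin t)^2 = |Real.sin s - Real.sin t|^2 := (sq_abs _).symm
          _ ≤ |s - t|^2 := by nlinarith [abs_nonneg (Real.sin s - Real.sin t), abs_nonneg (s - t)]
          _ = (s-t)^2 := sq_abs _
      nlinarith [sq_nonneg ρ]
    have habs : |s - t|^2 = (s-t)^2 := sq_abs _
    nlinarith [sq_nonneg ρ, sq_nonneg (s-t)]
  calc Real.sqrt ((ρ * (Real.cos s - Real.cos t))^2 + (ρ * (Real.sin s - Real.sin t))^2)
      ≤ Real.sqrt ((2 * ρ * |s - t|) ^ 2) := Real.sqrt_le_sqrt hb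
    _ = 2 * ρ * |s - t| := Real.sqrt_sq (by positivity)
    _ = (Real.toNNReal (2 * ρ) : ℝ) * dist s t := by
        rw [Real.dist_eq, Real.coe_toNNReal _ (by positivity)]

lemma aux_sphere_subset {ρ : ℝ} (hρ : 0 < ρ) :
    sphere (0 : E2) ρ ⊆ circMap ρ '' (Icc 0 (2 * π)) := by
  intro v hv
  have hnorm : ‖v‖ = ρ := by simpa using hv
  have hsum : (v 0)^2 + (v 1)^2 = ρ^2 := by
    rw [EuclideanSpace.norm_eq] at hnorm
    have : Real.sqrt (∑ i : Fin 2, ‖v i‖^2) = ρ := hnorm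
    have h2 : (∑ i : Fin 2, ‖v i‖^2) = ρ^2 := by
      have hnn : (0:ℝ) ≤ ∑ i : Fin 2, ‖v i‖ ^ 2 := by positivity
      nlinarith [Real.sq_sqrt hnn]
    simpa [Fin.sum_univ_two, Real.norm_eq_abs, sq_abs] using h2
  set w0 := v 0 / ρ with hw0
  set w1 := v 1 / ρ with hw1
  have hwsum : w0^2 + w1^2 = 1 := by
    rw [hw0, hw1]; field_simp
    linarith [hsum]
  have hw0le : -1 ≤ w0 ∧ w0 ≤ 1 := by constructor <;> nlinarith [sq_nonneg w1]
  set t : ℝ := if 0 ≤ w1 then Real.arccos w0 else 2 * π - Real.arccos w0 with ht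
  have harc1 := Real.arccos_nonneg w0
  have harc2 := Real.arccos_le_pi w0
  have hπ := Real.pi_pos
  have htmem : t ∈ Icc 0 (2 * π) := by
    rw [ht]; split_ifs <;> constructor <;> linarith
  have hcos : Real.cos t = w0 := by
    rw [ht]; split_ifs
    · exact Real.cos_arccos hw0le.1 hw0le.2
    · rw [show 2 * π - Real.arccos w0 = -(Real.arccos w0) + 2 * π by ring,
        Real.cos_add_two_pi, Real.cos_neg]
      exact Real.cos_arccos hw0le.1 hw0le.2
  have hsinabs : Real.sin (Real.arccos w0) = Real.sqrt (1 - w0^2) := Real.sin_arccos w0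
  have hsin : Real.sin t = w1 := by
    have h1 : Real.sqrt (1 - w0^2) = |w1| := by
      rw [show 1 - w0^2 = w1^2 by linarith, Real.sqrt_sq_eq_abs]
    rw [ht]; split_ifs with hcase
    · rw [hsinabs, h1, abs_of_nonneg hcase]
    · rw [show 2 * π - Real.arccos w0 = -(Real.arccos w0) + 2 * π by ring,
        Real.sin_add_two_pi, Real.sin_neg, hsinabs, h1, abs_of_neg (not_le.1 hcase)]
      ring
  refine ⟨t, htmem, ?_⟩
  have h0 : circMap ρ t 0 = v 0 := by
    rw [circMap_apply0, hcos, hw0]; field_simp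
  have h1 : circMap ρ t 1 = v 1 := by
    rw [circMap_apply1, hsin, hw1]; field_simp
  ext i
  fin_cases i
  · exact h0
  · exact h1

private lemma aux_frontier_finite (Ω : Set E2) (hΩopen : IsOpen Ω) (hΩconv : Convex ℝ Ω)
    (hΩ0 : (0:E2) ∈ Ω) {R : ℝ} (hR0 : 0 < R) (hRsub : closure Ω ⊆ closedBall 0 R) :
    μH[1] (frontier Ω) < ⊤ := by
  set K := closure Ω with hK
  have hKconv : Convex ℝ K := hΩconv.closure
  have hKcl : IsClosed K := isClosed_closure
  have hKne : K.Nonempty := ⟨0, subset_closure hΩ0⟩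
  set ρ := R + 1 with hρ
  have hρpos : 0 < ρ := by positivity
  -- the metric projection
  set P : E2 → E2 := fun u => (aux_exists_proj hKconv hKcl hKne u).choose with hP
  have hPmem : ∀ u, P u ∈ K := fun u => (aux_exists_proj hKconv hKcl hKne u).choose_spec.1
  have hPchar : ∀ u, ∀ w ∈ K, ⟪u - P u, w - P u⟫ ≤ 0 :=
    fun u => (aux_exists_proj hKconv hKcl hKne u).choose_spec.2
  have hPlip : LipschitzWith 1 P := by
    apply LipschitzWith.of_dist_le_mul
    intro u v
    simp only [NNReal.coe_one, one_mul, dist_eq_norm]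
    exact aux_proj_lip (hPchar u) (hPchar v) (hPmem u) (hPmem v)
  -- frontier is contained in the image of the sphere under P
  have hsub : frontier Ω ⊆ P '' (sphere (0:E2) ρ) := by
    intro z hz
    have hzK : z ∈ K := by
      rw [hK]; exact frontier_subset_closure hz
    have hznΩ : z ∉ Ω := by
      rw [hΩopen.frontier_eq] at hz; exact hz.2
    obtain ⟨f, hf⟩ := geometric_hahn_banach_open_point hΩconv hΩopen hznΩ
    set ν := (InnerProductSpace.toDual ℝ E2).symm f with hν
    have hνinner : ∀ w, ⟪ν, w⟫ = f w := fun w => InnerProductSpace.toDual_symm_apply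
    have hfz : 0 < f z := by
      have := hf 0 hΩ0
      simpa using this
    have hνne : ν ≠ 0 := by
      intro h0
      have : f z = 0 := by rw [← hνinner z, h0, inner_zero_left]
      linarith
    have hνnorm : 0 < ‖ν‖ := norm_pos_iff.2 hνne
    have hKle : ∀ w ∈ K, f w ≤ f z := by
      intro w hw
      have hcl : K ⊆ {w | f w ≤ f z} := by
        apply closure_minimal
        · exact fun a ha => (hf a ha).le
        · exact isClosed_le (f.continuous) continuous_const
      exact hcl hw
    -- find t with ‖z + t • ν‖ = ρ
    set g : ℝ → ℝ := fun t => ‖z + t • ν‖ with hg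
    have hgc : Continuous g := (continuous_const.add (continuous_id.smul continuous_const)).norm
    set T := (ρ + ‖z‖) / ‖ν‖ with hT
    have hTpos : 0 ≤ T := by positivity
    have hg0 : g 0 ≤ R := by
      have := hRsub hzK
      simpa [hg] using (mem_closedBall_zero_iff.mp this)
    have hgT : ρ ≤ g T := by
      have h1 : ‖(T:ℝ) • ν‖ = T * ‖ν‖ := by
        rw [norm_smul, Real.norm_eq_abs, abs_of_nonneg hTpos]
      have h2 : T * ‖ν‖ = ρ + ‖z‖ := by
        rw [hT]; field_simp
      have h3 : ‖T • ν‖ ≤ ‖z + T • ν‖ + ‖z‖ := by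
        calc ‖T • ν‖ = ‖(z + T • ν) - z‖ := by rw [add_sub_cancel_left]
          _ ≤ ‖z + T • ν‖ + ‖z‖ := norm_sub_le _ _
      rw [hg]; simp only
      linarith [h1, h2, h3]
    have hmem : ρ ∈ Icc (g 0) (g T) := ⟨by linarith [hg0, hρ ▸ (by linarith : R < ρ)], hgT⟩
    obtain ⟨t, htmem, hgt⟩ := intermediate_value_Icc hTpos (hgc.continuousOn) hmem
    have htnn : 0 ≤ t := htmem.1
    have hsph : z + t • ν ∈ sphere (0:E2) ρ := by
      rw [mem_sphere_zero_iff_norm]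
      exact hgt
    refine ⟨z + t • ν, hsph, ?_⟩
    apply aux_proj_unique (hPmem _) hzK (hPchar _)
    intro w hw
    have : (z + t • ν) - z = t • ν := by abel
    rw [this, real_inner_smul_left]
    have h4 : ⟪ν, w - z⟫ = f w - f z := by rw [inner_sub_right, hνinner, hνinner]
    have h5 : ⟪ν, w - z⟫ ≤ 0 := by rw [h4]; linarith [hKle w hw]
    exact mul_nonpos_of_nonneg_of_nonpos htnn h5
  -- measure bounds
  calc μH[1] (frontier Ω) ≤ μH[1] (P '' (sphere (0:E2) ρ)) := measure_mono hsub
    _ ≤ (1:ℝ≥0) ^ (1:ℝ) * μH[1] (sphere (0:E2) ρ) :=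
        hPlip.hausdorffMeasure_image_le zero_le_one _
    _ ≤ 1 * μH[1] (circMap ρ '' (Icc 0 (2 * π))) := by
        gcongr
        · simp
        · exact aux_sphere_subset hρpos
    _ ≤ 1 * ((Real.toNNReal (2*ρ) : ℝ≥0) ^ (1:ℝ) * μH[1] (Icc (0:ℝ) (2 * π))) := by
        gcongr
        exact (aux_circ_lip hρpos.le).hausdorffMeasure_image_le zero_le_one _
    _ < ⊤ := by
        rw [hausdorffMeasure_real, Real.volume_Icc, one_mul, ENNReal.rpow_one]
        exact ENNReal.mul_lt_top ENNReal.coe_lt_top ENNReal.ofReal_lt_top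

set_option maxHeartbeats 1000000 in
private lemma aux_key (Ω : Set E2) (hΩbdd : Bornology.IsBounded Ω) (hΩ0 : (0:E2) ∈ Ω)
    {R r : ℝ} (hR0 : 0 < R) (hr0 : 0 < r) (hrR : r ≤ R)
    (hRsub : closure Ω ⊆ closedBall 0 R)
    (hrsub : ∀ ϑ : E2, ‖ϑ‖ = 1 → r • ϑ ∈ Ω)
    (hσfin : μH[1] (frontier Ω) < ⊤)
    {q B : ℝ} (hq1 : 1 ≤ q) (hB : 0 < B)
    (hbound : ∀ f : EuclideanSpace ℝ (Fin 2) → ℂ,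
        Continuous f → HasCompactSupport f →
        (∫⁻ x, (lacMax Ω f x) ^ q) ^ (1/q)
          ≤ ENNReal.ofReal B * (∫⁻ x, ((‖f x‖₊ : ℝ≥0∞)) ^ q) ^ (1/q))
    (θ : E2) (hθ : ‖θ‖ = 1) (N : ℕ) :
    ∑ n ∈ Finset.range (N+1),
      (bdyMeasure Ω (capPlus Ω θ (((2:ℝ)^n)⁻¹ * (r/2)))) ^ q
      ≤ ENNReal.ofReal 64 * ENNReal.ofReal B ^ q := by
  classical
  have hq0 : (0:ℝ) < q := lt_of_lt_of_le one_pos hq1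
  have hqne : q ≠ 0 := ne_of_gt hq0
  set δ₁ : ℝ := r / 2 with hδ₁def
  have hδ₁0 : 0 < δ₁ := by positivity
  set σ := bdyMeasure Ω with hσdef
  have hσuniv : σ univ < ⊤ := by
    rw [hσdef, bdyMeasure, Measure.restrict_apply_univ]; exact hσfin
  haveI : IsFiniteMeasure σ := ⟨hσuniv⟩
  -- support function facts
  have hbddA : BddAbove ((fun z => (inner ℝ z θ : ℝ)) '' Ω) := by
    refine ⟨R, ?_⟩
    rintro _ ⟨z, hz, rfl⟩
    calc (inner ℝ z θ : ℝ) ≤ ‖z‖ * ‖θ‖ := real_inner_le_norm z θ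
      _ = ‖z‖ := by rw [hθ, mul_one]
      _ ≤ R := mem_closedBall_zero_iff.mp (hRsub (subset_closure hz))
  set h : ℝ := suppFn Ω θ with hhdef
  have hsupp_le : ∀ z ∈ closure Ω, (inner ℝ z θ : ℝ) ≤ h := by
    intro z hz
    have hcl : closure Ω ⊆ {z : E2 | (inner ℝ z θ : ℝ) ≤ h} := by
      apply closure_minimal
      · intro w hw
        exact le_csSup hbddA ⟨w, hw, rfl⟩
      · exact isClosed_le (continuous_id.inner continuous_const) continuous_const
    exact hcl hz
  have hsupp_ge : r ≤ h := by
    have hmem : r • θ ∈ Ω := hrsub θ hθ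
    have : (inner ℝ (r • θ) θ : ℝ) = r := by
      rw [real_inner_smul_left, real_inner_self_eq_norm_sq, hθ]; ring
    calc r = (inner ℝ (r • θ) θ : ℝ) := this.symm
      _ ≤ h := le_csSup hbddA ⟨r • θ, hmem, rfl⟩
  have hsupp_ub : h ≤ R := by
    apply csSup_le (Set.Nonempty.image _ ⟨0, hΩ0⟩)
    rintro _ ⟨z, hz, rfl⟩
    calc (inner ℝ z θ : ℝ) ≤ ‖z‖ * ‖θ‖ := real_inner_le_norm z θ
      _ = ‖z‖ := by rw [hθ, mul_one]
      _ ≤ R := mem_closedBall_zero_iff.mp (hRsub (subset_closure hz))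
  have hfrR : ∀ y ∈ frontier Ω, ‖y‖ ≤ R := fun y hy =>
    mem_closedBall_zero_iff.mp (hRsub (frontier_subset_closure hy))
  have hcapmeas : ∀ (ϑ : E2) (u : ℝ), MeasurableSet (capPlus Ω ϑ u) := by
    intro ϑ u
    have : capPlus Ω ϑ u = frontier Ω ∩ {y : E2 | suppFn Ω ϑ - u ≤ (inner ℝ y ϑ : ℝ)} := rfl
    rw [this]
    exact isClosed_frontier.measurableSet.inter
      ((isClosed_le continuous_const (continuous_id.inner continuous_const)).measurableSet)
  have hcapfin : ∀ (ϑ : E2) (u : ℝ), σ (capPlus Ω ϑ u) ≠ ⊤ := fun ϑ u => measure_ne_top σ _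
  -- basis
  obtain ⟨b, hb0⟩ := aux_basis θ hθ
  have hb1norm : ‖b 1‖ = 1 := b.orthonormal.1 1
  have hrepr0 : ∀ x : E2, b.repr x 0 = (inner ℝ x θ : ℝ) := by
    intro x
    rw [b.repr_apply_apply x 0, hb0]
    exact real_inner_comm x θ
  have habs1 : ∀ x : E2, |b.repr x 1| ≤ ‖x‖ := by
    intro x
    rw [b.repr_apply_apply x 1]
    calc |(inner ℝ (b 1) x : ℝ)| ≤ ‖b 1‖ * ‖x‖ := abs_real_inner_le_norm _ _
      _ = ‖x‖ := by rw [hb1norm, one_mul]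
  -- scales
  set δ : ℝ := ((2:ℝ)^N)⁻¹ * δ₁ with hδdef
  have hδ0 : 0 < δ := by positivity
  have hδle : δ ≤ δ₁ := by
    rw [hδdef]
    nth_rewrite 2 [show δ₁ = 1 * δ₁ by ring]
    apply mul_le_mul_of_nonneg_right _ hδ₁0.le
    rw [inv_le_one_iff₀]
    right; exact one_le_pow₀ (by norm_num)
  have hδleR : δ ≤ R := le_trans hδle (by rw [hδ₁def]; linarith)
  set t : ℕ → ℝ := fun n => ((2:ℝ)^n)⁻¹ * δ₁ with htdef
  set c : ℕ → ℝ := fun n => ((2:ℝ)^(N-n))⁻¹ with hcdef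
  have hc0 : ∀ n, 0 < c n := fun n => by positivity
  have hc1 : ∀ n, c n ≤ 1 := fun n => by
    rw [hcdef]; simp only
    rw [inv_le_one_iff₀]; right; exact one_le_pow₀ (by norm_num)
  have hct : ∀ n, n ≤ N → c n * t n = δ := by
    intro n hn
    rw [hcdef, htdef, hδdef]
    simp only
    rw [← mul_assoc, ← mul_inv, ← pow_add, Nat.sub_add_cancel hn]
  set a : ℕ → ℝ := fun n => c n * h with hadef
  have ha0 : ∀ n, 0 ≤ a n := fun n => mul_nonneg (hc0 n).le (le_trans hr0.le hsupp_ge)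
  have haR : ∀ n, a n ≤ R := fun n => by
    calc a n ≤ 1 * h := mul_le_mul_of_nonneg_right (hc1 n) (le_trans hr0.le hsupp_ge)
      _ = h := one_mul h
      _ ≤ R := hsupp_ub
  -- test function
  set φ : ℝ → ℝ := fun s => max 0 (min 1 (2 - |s| / (2*δ))) with hφdef
  set η : ℝ → ℝ := fun s => max 0 (min 1 (2 - s / (4*R))) with hηdef
  set g : E2 → ℝ := fun x => φ (inner ℝ x θ : ℝ) * η ‖x‖ with hgdef
  set f : E2 → ℂ := fun x => ((g x : ℝ) : ℂ) with hfdef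
  have hφ01 : ∀ s, 0 ≤ φ s ∧ φ s ≤ 1 :=
    fun s => ⟨le_max_left _ _, max_le zero_le_one (min_le_left _ _)⟩
  have hη01 : ∀ s, 0 ≤ η s ∧ η s ≤ 1 :=
    fun s => ⟨le_max_left _ _, max_le zero_le_one (min_le_left _ _)⟩
  have hg01 : ∀ x, 0 ≤ g x ∧ g x ≤ 1 := by
    intro x
    constructor
    · exact mul_nonneg (hφ01 _).1 (hη01 _).1
    · exact mul_le_one₀ (hφ01 _).2 (hη01 _).1 (hη01 _).2
  have hφone : ∀ s, |s| ≤ 2*δ → φ s = 1 := by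
    intro s hs
    rw [hφdef]; simp only
    rw [min_eq_left, max_eq_right zero_le_one]
    have : |s| / (2*δ) ≤ 1 := by
      rw [div_le_one (by positivity)]; exact hs
    linarith
  have hηone : ∀ s, s ≤ 4*R → η s = 1 := by
    intro s hs
    rw [hηdef]; simp only
    rw [min_eq_left, max_eq_right zero_le_one]
    have : s / (4*R) ≤ 1 := by
      rw [div_le_one (by positivity)]; exact hs
    linarith
  have hφzero : ∀ s, φ s ≠ 0 → |s| ≤ 4*δ := by
    intro s hs
    by_contra hcon
    push_neg at hcon
    apply hs
    rw [hφdef]; simp only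
    rw [max_eq_left]
    have : 2 - |s| / (2*δ) ≤ 0 := by
      have : (2:ℝ) ≤ |s| / (2*δ) := by
        rw [le_div_iff₀ (by positivity)]; linarith
      linarith
    exact le_trans (min_le_right _ _) this
  have hηzero : ∀ s, η s ≠ 0 → s ≤ 8*R := by
    intro s hs
    by_contra hcon
    push_neg at hcon
    apply hs
    rw [hηdef]; simp only
    rw [max_eq_left]
    have : 2 - s / (4*R) ≤ 0 := by
      have : (2:ℝ) ≤ s / (4*R) := by
        rw [le_div_iff₀ (by positivity)]; linarith
      linarith
    exact le_trans (min_le_right _ _) this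
  have hφcont : Continuous φ := by
    apply continuous_const.max
    apply continuous_const.min
    exact continuous_const.sub (continuous_abs.div_const _)
  have hηcont : Continuous η := by
    apply continuous_const.max
    apply continuous_const.min
    exact continuous_const.sub (continuous_id.div_const _)
  have hgcont : Continuous g := by
    apply Continuous.mul
    · exact hφcont.comp (continuous_id.inner continuous_const)
    · exact hηcont.comp continuous_norm
  have hfcont : Continuous f := Complex.continuous_ofReal.comp hgcont
  have hfsupp : HasCompactSupport f := by
    apply HasCompactSupport.intro (isCompact_closedBall (0:E2) (8*R))
    intro x hx
    have hxn : ¬ ‖x‖ ≤ 8*R := by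
      simpa [mem_closedBall_zero_iff] using hx
    have : η ‖x‖ = 0 := by
      by_contra hcon
      exact hxn (hηzero _ hcon)
    rw [hfdef]; simp only
    rw [hgdef]; simp only
    rw [this, mul_zero, Complex.ofReal_zero]
  -- the E sets
  set Eset : ℕ → Set E2 := fun n =>
    {x : E2 | b.repr x 0 ∈ Icc (a n) (a n + δ) ∧ b.repr x 1 ∈ Icc (-R) R} with hEdef
  have hcoord0 : Continuous (fun x : E2 => b.repr x 0) :=
    (EuclideanSpace.proj (0 : Fin 2)).continuous.comp b.repr.continuous
  have hcoord1 : Continuous (fun x : E2 => b.repr x 1) :=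
    (EuclideanSpace.proj (1 : Fin 2)).continuous.comp b.repr.continuous
  have hEmeas : ∀ n, MeasurableSet (Eset n) := by
    intro n
    exact ((isClosed_Icc.preimage hcoord0).inter (isClosed_Icc.preimage hcoord1)).measurableSet
  have hvolE : ∀ n, volume (Eset n) = ENNReal.ofReal δ * ENNReal.ofReal (2*R) := by
    intro n
    rw [hEdef]
    rw [aux_volume_box b measurableSet_Icc measurableSet_Icc, Real.volume_Icc, Real.volume_Icc]
    congr 2 <;> ring
  -- disjointness
  have hEdisj : ∀ m n, m < n → n ≤ N → ∀ x, x ∈ Eset m → x ∈ Eset n → False := by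
    intro m n hmn hnN x hxm hxn
    have h2N : (0:ℝ) < 2^N := by positivity
    set A1 : ℝ := (2:ℝ)^(N-n) with hA1
    set A2 : ℝ := (2:ℝ)^(N-m) with hA2
    have hA1pos : 0 < A1 := by positivity
    have hA2pos : 0 < A2 := by positivity
    have hsplit : N - m = (N - n) + (n - m) := by omega
    have hA2ge : 2*A1 ≤ A2 := by
      rw [hA2, hsplit, pow_add, hA1]
      have : (2:ℝ) ≤ 2^(n-m) := by
        calc (2:ℝ) = 2^1 := (pow_one 2).symm
          _ ≤ 2^(n-m) := pow_le_pow_right₀ (by norm_num) (by omega)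
      nlinarith
    have hA1le : A1 * 2 ≤ 2^N := by
      rw [hA1, ← pow_succ]
      exact pow_le_pow_right₀ (by norm_num) (by omega)
    have hcm : c m ≤ c n / 2 := by
      have e1 : A2⁻¹ ≤ (2*A1)⁻¹ := by
        apply inv_anti₀ (by positivity) hA2ge
      have e2 : (2*A1)⁻¹ = A1⁻¹ / 2 := by
        rw [mul_inv]; ring
      calc c m = A2⁻¹ := rfl
        _ ≤ (2*A1)⁻¹ := e1
        _ = A1⁻¹ / 2 := e2
        _ = c n / 2 := rfl
    have hcn : 2 * ((2:ℝ)^N)⁻¹ ≤ c n := by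
      have e1 : (2:ℝ) * ((2:ℝ)^N)⁻¹ = ((2:ℝ)^N / 2)⁻¹ := by
        field_simp
      rw [e1]
      have : c n = A1⁻¹ := rfl
      rw [this]
      apply inv_anti₀ hA1pos
      linarith
    have hgap : a m + δ < a n := by
      have hhr : 2*δ₁ ≤ h := by rw [hδ₁def]; linarith [hsupp_ge]
      have hcd : ((2:ℝ)^N)⁻¹ ≤ c n - c m := by linarith
      have hmul : ((2:ℝ)^N)⁻¹ * (2*δ₁) ≤ (c n - c m) * h :=
        mul_le_mul hcd hhr (by positivity) (by nlinarith [hcd, inv_pos.mpr h2N])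
      have hδval : ((2:ℝ)^N)⁻¹ * (2*δ₁) = 2*δ := by rw [hδdef]; ring
      have hexp : a n - a m = (c n - c m) * h := by rw [hadef]; ring
      nlinarith [hδ0]
    have h1 := hxm.1.2
    have h2 := hxn.1.1
    linarith
  -- detection
  have hdetect : ∀ n, n ≤ N → ∀ x ∈ Eset n,
      (σ (capPlus Ω θ (t n)) : ℝ≥0∞) ≤ lacMax Ω f x := by
    intro n hn x hx
    set k : ℤ := -((N - n : ℕ) : ℤ) with hkdef
    have hck : (2:ℝ)^k = c n := by
      rw [hkdef, zpow_neg, zpow_natCast]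
    have hpoint : ∀ y, (capPlus Ω θ (t n)).indicator (fun _ => (1:ℝ)) y ≤ g (x - c n • y) := by
      intro y
      by_cases hy : y ∈ capPlus Ω θ (t n)
      · rw [indicator_of_mem hy]
        obtain ⟨hyfr, hyin⟩ := hy
        have hyθ : (inner ℝ y θ : ℝ) ≤ h := hsupp_le y (frontier_subset_closure hyfr)
        have hyθ2 : h - t n ≤ (inner ℝ y θ : ℝ) := hyin
        have hinner : (inner ℝ (x - c n • y) θ : ℝ) = b.repr x 0 - c n * (inner ℝ y θ : ℝ) := by
          rw [inner_sub_left, real_inner_smul_left, hrepr0]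
        have hx0 := hx.1
        have hct' := hct n hn
        have habs : |(inner ℝ (x - c n • y) θ : ℝ)| ≤ 2*δ := by
          rw [hinner, abs_le]
          constructor
          · have h5 : c n * (inner ℝ y θ : ℝ) ≤ a n := by
              rw [hadef]
              exact mul_le_mul_of_nonneg_left hyθ (hc0 n).le
            have := hx0.1
            simp only [mem_Icc] at hx0
            linarith [hx0.1, hδ0]
          · have h5 : a n - δ ≤ c n * (inner ℝ y θ : ℝ) := by
              have h6 := mul_le_mul_of_nonneg_left hyθ2 (hc0 n).le
              rw [mul_sub] at h6
              have ha' : a n = c n * h := rfl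
              linarith [hct', ha']
            simp only [mem_Icc] at hx0
            linarith [hx0.2]
        have hnorm : ‖x - c n • y‖ ≤ 4*R := by
          have h1 : ‖x‖ ≤ |b.repr x 0| + |b.repr x 1| := aux_norm_le b x
          simp only [hEdef, mem_setOf_eq, mem_Icc] at hx
          have h2 : |b.repr x 0| ≤ R + δ := by
            rw [abs_le]
            constructor
            · linarith [hx.1.1, ha0 n, hδ0]
            · linarith [hx.1.2, haR n]
          have h3 : |b.repr x 1| ≤ R := abs_le.mpr ⟨hx.2.1, hx.2.2⟩
          have h4 : ‖c n • y‖ ≤ R := by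
            rw [norm_smul, Real.norm_eq_abs, abs_of_pos (hc0 n)]
            calc c n * ‖y‖ ≤ 1 * R :=
                mul_le_mul (hc1 n) (hfrR y hyfr) (norm_nonneg y) zero_le_one
              _ = R := one_mul R
          calc ‖x - c n • y‖ ≤ ‖x‖ + ‖c n • y‖ := norm_sub_le _ _
            _ ≤ (|b.repr x 0| + |b.repr x 1|) + R := by linarith
            _ ≤ ((R + δ) + R) + R := by linarith
            _ ≤ 4*R := by linarith [hδleR]
        show (1:ℝ) ≤ g (x - c n • y)
        rw [hgdef]
        simp only
        rw [hφone _ habs, hηone _ hnorm, one_mul]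
      · rw [indicator_of_notMem hy]
        exact (hg01 _).1
    have hint1 : Integrable (fun y => g (x - c n • y)) σ := by
      apply Integrable.mono' (integrable_const (1:ℝ))
      · exact (hgcont.comp (continuous_const.sub (continuous_id.const_smul (c n)))).aestronglyMeasurable
      · filter_upwards with y
        rw [Real.norm_eq_abs, abs_of_nonneg (hg01 _).1]
        exact (hg01 _).2
    have hint2 : Integrable ((capPlus Ω θ (t n)).indicator (fun _ => (1:ℝ))) σ :=
      (integrable_const (1:ℝ)).indicator (hcapmeas _ _)
    have hIge : (σ (capPlus Ω θ (t n))).toReal ≤ ∫ y, g (x - c n • y) ∂σ := by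
      have h7 := integral_mono hint2 hint1 hpoint
      rwa [integral_indicator_const (1:ℝ) (hcapmeas _ _), smul_eq_mul, mul_one] at h7
    have hIc : ∫ y, f (x - (2:ℝ)^k • y) ∂σ = ((∫ y, g (x - c n • y) ∂σ : ℝ) : ℂ) := by
      rw [hck]
      exact integral_ofReal
    calc (σ (capPlus Ω θ (t n)) : ℝ≥0∞)
        = ENNReal.ofReal ((σ (capPlus Ω θ (t n))).toReal) :=
          (ENNReal.ofReal_toReal (hcapfin _ _)).symm
      _ ≤ ENNReal.ofReal (∫ y, g (x - c n • y) ∂σ) := ENNReal.ofReal_le_ofReal hIge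
      _ ≤ (‖∫ y, f (x - (2:ℝ)^k • y) ∂σ‖₊ : ℝ≥0∞) := by
          rw [hIc, Complex.nnnorm_real, ← enorm_eq_nnnorm, Real.enorm_eq_ofReal_abs]
          exact ENNReal.ofReal_le_ofReal (le_abs_self _)
      _ ≤ lacMax Ω f x :=
          le_iSup (fun j : ℤ => (‖∫ y, f (x - (2:ℝ)^j • y) ∂σ‖₊ : ℝ≥0∞)) k
  -- pointwise sum bound
  have hG : ∀ x, (∑ n ∈ Finset.range (N+1),
      (Eset n).indicator (fun _ => σ (capPlus Ω θ (t n)) ^ q) x) ≤ lacMax Ω f x ^ q := by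
    intro x
    by_cases hx : ∃ n₀ ∈ Finset.range (N+1), x ∈ Eset n₀
    · obtain ⟨n₀, hn₀mem, hxn₀⟩ := hx
      rw [Finset.sum_eq_single_of_mem n₀ hn₀mem]
      · rw [indicator_of_mem hxn₀]
        exact ENNReal.rpow_le_rpow
          (hdetect n₀ (Nat.lt_succ_iff.mp (Finset.mem_range.mp hn₀mem)) x hxn₀) hq0.le
      · intro m hmmem hmne
        rw [indicator_of_notMem]
        intro hxm
        rcases lt_or_gt_of_ne hmne with hlt | hgt
        · exact hEdisj m n₀ hlt (Nat.lt_succ_iff.mp (Finset.mem_range.mp hn₀mem)) x hxm hxn₀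
        · exact hEdisj n₀ m hgt (Nat.lt_succ_iff.mp (Finset.mem_range.mp hmmem)) x hxn₀ hxm
    · push_neg at hx
      rw [Finset.sum_eq_zero]
      · exact bot_le
      · intro m hm
        rw [indicator_of_notMem (hx m hm)]
  have hlow : ∑ n ∈ Finset.range (N+1), σ (capPlus Ω θ (t n)) ^ q * volume (Eset n)
      ≤ ∫⁻ x, lacMax Ω f x ^ q := by
    calc ∑ n ∈ Finset.range (N+1), σ (capPlus Ω θ (t n)) ^ q * volume (Eset n)
        = ∑ n ∈ Finset.range (N+1),
            ∫⁻ x, (Eset n).indicator (fun _ => σ (capPlus Ω θ (t n)) ^ q) x := by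
          apply Finset.sum_congr rfl
          intro n _
          rw [lintegral_indicator_const (hEmeas n)]
      _ = ∫⁻ x, ∑ n ∈ Finset.range (N+1),
            (Eset n).indicator (fun _ => σ (capPlus Ω θ (t n)) ^ q) x :=
          (lintegral_finset_sum _ (fun n _ => measurable_const.indicator (hEmeas n))).symm
      _ ≤ ∫⁻ x, lacMax Ω f x ^ q := lintegral_mono hG
  -- upper bound for the test function
  set Fbox : Set E2 :=
    {x : E2 | b.repr x 0 ∈ Icc (-(4*δ)) (4*δ) ∧ b.repr x 1 ∈ Icc (-(8*R)) (8*R)} with hFdef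
  have hFmeas : MeasurableSet Fbox :=
    ((isClosed_Icc.preimage hcoord0).inter (isClosed_Icc.preimage hcoord1)).measurableSet
  have hup : ∫⁻ x, ((‖f x‖₊ : ℝ≥0∞)) ^ q ≤ ENNReal.ofReal (8*δ) * ENNReal.ofReal (16*R) := by
    have hptw : ∀ x, ((‖f x‖₊ : ℝ≥0∞)) ^ q ≤ Fbox.indicator (fun _ => (1:ℝ≥0∞)) x := by
      intro x
      by_cases hx : x ∈ Fbox
      · rw [indicator_of_mem hx]
        apply ENNReal.rpow_le_one _ hq0.le
        have h8 : ‖f x‖ ≤ 1 := by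
          rw [hfdef]
          simp only [Complex.norm_real, Real.norm_eq_abs]
          rw [abs_of_nonneg (hg01 x).1]
          exact (hg01 x).2
        have h9 : ‖f x‖₊ ≤ 1 := h8
        exact_mod_cast h9
      · rw [indicator_of_notMem hx]
        have hfx : f x = 0 := by
          rw [hfdef]
          simp only
          suffices hgz : g x = 0 by rw [hgz, Complex.ofReal_zero]
          rcases not_and_or.mp hx with hA | hB
          · have h10 : ¬ |b.repr x 0| ≤ 4*δ := by
              intro hcon
              rw [abs_le] at hcon
              exact hA ⟨by linarith [hcon.1], hcon.2⟩
            have hφ0 : φ (inner ℝ x θ : ℝ) = 0 := by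
              by_contra hcon
              apply h10
              rw [hrepr0]
              exact hφzero _ hcon
            rw [hgdef]
            simp only
            rw [hφ0, zero_mul]
          · have hnx : ¬ ‖x‖ ≤ 8*R := by
              intro hcon
              apply hB
              have h11 := habs1 x
              constructor
              · linarith [neg_abs_le (b.repr x 1)]
              · linarith [le_abs_self (b.repr x 1)]
            have hη0 : η ‖x‖ = 0 := by
              by_contra hcon
              exact hnx (hηzero _ hcon)
            rw [hgdef]
            simp only
            rw [hη0, mul_zero]
        rw [hfx, nnnorm_zero, ENNReal.coe_zero, ENNReal.zero_rpow_of_pos hq0]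
    calc ∫⁻ x, ((‖f x‖₊ : ℝ≥0∞)) ^ q ≤ ∫⁻ x, Fbox.indicator (fun _ => (1:ℝ≥0∞)) x :=
          lintegral_mono hptw
      _ = 1 * volume Fbox := lintegral_indicator_const hFmeas 1
      _ = ENNReal.ofReal (8*δ) * ENNReal.ofReal (16*R) := by
          rw [one_mul, hFdef, aux_volume_box b measurableSet_Icc measurableSet_Icc,
            Real.volume_Icc, Real.volume_Icc]
          congr 2 <;> ring
  -- combine with the operator bound
  have hb2 := hbound f hfcont hfsupp
  have hbq : (∫⁻ x, lacMax Ω f x ^ q)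
      ≤ ENNReal.ofReal B ^ q * ∫⁻ x, ((‖f x‖₊ : ℝ≥0∞)) ^ q := by
    have h12 := ENNReal.rpow_le_rpow hb2 hq0.le
    have hqq : 1/q * q = 1 := by field_simp
    rw [← ENNReal.rpow_mul, hqq, ENNReal.rpow_one,
      ENNReal.mul_rpow_of_nonneg _ _ hq0.le, ← ENNReal.rpow_mul, hqq,
      ENNReal.rpow_one] at h12
    exact h12
  set V : ℝ≥0∞ := ENNReal.ofReal δ * ENNReal.ofReal (2*R) with hVdef
  have hVne : V ≠ 0 := by
    rw [hVdef]
    apply mul_ne_zero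
    · simp only [ne_eq, ENNReal.ofReal_eq_zero, not_le]
      exact hδ0
    · simp only [ne_eq, ENNReal.ofReal_eq_zero, not_le]
      positivity
  have hVtop : V ≠ ⊤ := by
    rw [hVdef]
    exact ENNReal.mul_ne_top ENNReal.ofReal_ne_top ENNReal.ofReal_ne_top
  have hmain : (∑ n ∈ Finset.range (N+1), σ (capPlus Ω θ (t n)) ^ q) * V
      ≤ (ENNReal.ofReal 64 * ENNReal.ofReal B ^ q) * V := by
    calc (∑ n ∈ Finset.range (N+1), σ (capPlus Ω θ (t n)) ^ q) * V
        = ∑ n ∈ Finset.range (N+1), σ (capPlus Ω θ (t n)) ^ q * V := Finset.sum_mul _ _ _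
      _ = ∑ n ∈ Finset.range (N+1), σ (capPlus Ω θ (t n)) ^ q * volume (Eset n) := by
          apply Finset.sum_congr rfl
          intro n _
          rw [hvolE n]
      _ ≤ ∫⁻ x, lacMax Ω f x ^ q := hlow
      _ ≤ ENNReal.ofReal B ^ q * ∫⁻ x, ((‖f x‖₊ : ℝ≥0∞)) ^ q := hbq
      _ ≤ ENNReal.ofReal B ^ q * (ENNReal.ofReal (8*δ) * ENNReal.ofReal (16*R)) := by
          exact mul_le_mul_right hup _
      _ = (ENNReal.ofReal 64 * ENNReal.ofReal B ^ q) * V := by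
          rw [hVdef,
            show ENNReal.ofReal (8*δ) = ENNReal.ofReal 8 * ENNReal.ofReal δ by
              rw [← ENNReal.ofReal_mul (by norm_num : (0:ℝ) ≤ 8)],
            show ENNReal.ofReal (16*R) = ENNReal.ofReal 8 * ENNReal.ofReal (2*R) by
              rw [← ENNReal.ofReal_mul (by norm_num : (0:ℝ) ≤ 8)]; ring_nf,
            show ENNReal.ofReal 64 = ENNReal.ofReal 8 * ENNReal.ofReal 8 by
              rw [← ENNReal.ofReal_mul (by norm_num : (0:ℝ) ≤ 8)]; norm_num]
          ring
  have hfinal := (ENNReal.mul_le_mul_iff_left hVne hVtop).mp hmain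
  calc ∑ n ∈ Finset.range (N+1), (σ (capPlus Ω θ (((2:ℝ)^n)⁻¹ * δ₁))) ^ q
      = ∑ n ∈ Finset.range (N+1), σ (capPlus Ω θ (t n)) ^ q := by
        apply Finset.sum_congr rfl
        intro n _
        rfl
    _ ≤ ENNReal.ofReal 64 * ENNReal.ofReal B ^ q := hfinal

set_option maxHeartbeats 1000000 in
/-- If `𝓜` is bounded on `L^q(ℝ²)` with operator bound `B` (tested on
continuous compactly supported functions), then
`sup_{θ ∈ S¹} (∫₀^{δ₁} Λ(θ,δ)^q δ⁻¹ dδ)^{1/q} ≤ c⁻¹ B` for constants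
`c, δ₁ > 0` depending only on `Ω` and `q`. -/

theorem stmt_1 (Ω : Set (EuclideanSpace ℝ (Fin 2)))
    (hΩopen : IsOpen Ω) (hΩconv : Convex ℝ Ω)
    (hΩbdd : Bornology.IsBounded Ω)
    (hΩ0 : (0 : EuclideanSpace ℝ (Fin 2)) ∈ Ω)
    (q : ℝ) (hq1 : 1 ≤ q)
    (B : ℝ) (hB : 0 < B)
    (hbound : ∀ f : EuclideanSpace ℝ (Fin 2) → ℂ,
        Continuous f → HasCompactSupport f →
        (∫⁻ x, (lacMax Ω f x) ^ q) ^ (1/q)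
          ≤ ENNReal.ofReal B * (∫⁻ x, ((‖f x‖₊ : ℝ≥0∞)) ^ q) ^ (1/q)) :
    ∃ c > (0:ℝ), ∃ δ₁ > (0:ℝ),
      ∀ θ : EuclideanSpace ℝ (Fin 2), ‖θ‖ = 1 →
        (∫⁻ δ in Set.Ioo (0:ℝ) δ₁, (capLen Ω θ δ) ^ q / ENNReal.ofReal δ) ^ (1/q)
          ≤ ENNReal.ofReal (c⁻¹ * B) := by

  classical
  obtain ⟨R₀, hR₀⟩ := hΩbdd.subset_closedBall 0
  set R : ℝ := max R₀ 1 with hRdef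
  have hR0 : (0:ℝ) < R := lt_of_lt_of_le one_pos (le_max_right _ _)
  have hRsub : closure Ω ⊆ closedBall 0 R :=
    closure_minimal (hR₀.trans (closedBall_subset_closedBall (le_max_left _ _)))
      isClosed_closedBall
  obtain ⟨ε, hε0, hball⟩ := Metric.isOpen_iff.mp hΩopen 0 hΩ0
  set r : ℝ := min (ε/2) R with hrdef
  have hr0 : 0 < r := lt_min (by positivity) hR0
  have hrR : r ≤ R := min_le_right _ _
  have hrsub : ∀ ϑ : E2, ‖ϑ‖ = 1 → r • ϑ ∈ Ω := by
    intro ϑ hϑ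
    apply hball
    rw [mem_ball_zero_iff, norm_smul, hϑ, mul_one, Real.norm_eq_abs, abs_of_pos hr0]
    calc r ≤ ε/2 := min_le_left _ _
      _ < ε := by linarith
  have hσfin := aux_frontier_finite Ω hΩopen hΩconv hΩ0 hR0 hRsub
  have hq0 : (0:ℝ) < q := lt_of_lt_of_le one_pos hq1
  have hqne : q ≠ 0 := ne_of_gt hq0
  set δ₁ : ℝ := r/2 with hδ₁def
  have hδ₁0 : 0 < δ₁ := by positivity
  refine ⟨1/128, by norm_num, δ₁, hδ₁0, ?_⟩
  intro θ hθ
  set σ := bdyMeasure Ω with hσdef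
  set A : ℝ≥0∞ := ENNReal.ofReal 64 * ENNReal.ofReal B ^ q with hAdef
  set u : ℕ → ℝ := fun n => ((2:ℝ)^n)⁻¹ * δ₁ with hudef
  have hu0 : ∀ n, 0 < u n := fun n => by positivity
  have hkey : ∀ ϑ : E2, ‖ϑ‖ = 1 → (∑' n : ℕ, (σ (capPlus Ω ϑ (u n))) ^ q) ≤ A := by
    intro ϑ hϑ
    rw [ENNReal.tsum_eq_iSup_sum]
    apply iSup_le
    intro s
    have hsub : s ⊆ Finset.range ((s.sup id) + 1) := by
      intro i hi
      rw [Finset.mem_range]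
      exact Nat.lt_succ_of_le (Finset.le_sup (f := id) hi)
    calc ∑ n ∈ s, (σ (capPlus Ω ϑ (u n))) ^ q
        ≤ ∑ n ∈ Finset.range ((s.sup id)+1), (σ (capPlus Ω ϑ (u n))) ^ q :=
          Finset.sum_le_sum_of_subset hsub
      _ ≤ A := aux_key Ω hΩbdd hΩ0 hR0 hr0 hrR hRsub hrsub hσfin hq1 hB hbound ϑ hϑ _
  have hu_succ : ∀ n, u n - u (n+1) = u (n+1) := by
    intro n
    rw [hudef]
    simp only
    rw [pow_succ]
    have h2n : ((2:ℝ)^n) ≠ 0 := by positivity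
    field_simp
    ring
  have hcapmono : ∀ (ϑ : E2) (x y : ℝ), x ≤ y → capPlus Ω ϑ x ⊆ capPlus Ω ϑ y := by
    intro ϑ x y hxy z hz
    exact ⟨hz.1, le_trans (by linarith [hz.2]) hz.2⟩
  have hcover : Ioo (0:ℝ) δ₁ ⊆ ⋃ n : ℕ, Ico (u (n+1)) (u n) := by
    intro x hx
    obtain ⟨hx0, hx1⟩ := hx
    have hex : ∃ n : ℕ, ((2:ℝ)^(n+1))⁻¹ * δ₁ ≤ x := by
      obtain ⟨n, hn⟩ := pow_unbounded_of_one_lt (δ₁ / x) (by norm_num : (1:ℝ) < 2)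
      refine ⟨n, ?_⟩
      rw [div_lt_iff₀ hx0] at hn
      rw [inv_mul_le_iff₀ (by positivity)]
      have h2 : ((2:ℝ)^n) * x ≤ ((2:ℝ)^(n+1)) * x := by
        have : ((2:ℝ)^n) ≤ ((2:ℝ)^(n+1)) := by
          apply pow_le_pow_right₀ (by norm_num)
          omega
        nlinarith
      linarith
    set n₀ := Nat.find hex with hn₀def
    have hlow : u (n₀ + 1) ≤ x := Nat.find_spec hex
    have hupper : x < u n₀ := by
      rcases Nat.eq_zero_or_pos n₀ with h0 | hpos
      · rw [h0]
        have : u 0 = δ₁ := by rw [hudef]; simp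
        rw [this]
        exact hx1
      · have hmin := Nat.find_min hex (show n₀ - 1 < n₀ from Nat.sub_lt hpos one_pos)
        have hn' : n₀ - 1 + 1 = n₀ := Nat.succ_pred_eq_of_pos hpos
        rw [hn'] at hmin
        push_neg at hmin
        exact hmin
    exact mem_iUnion.mpr ⟨n₀, hlow, hupper⟩
  have hint : (∫⁻ x in Ioo (0:ℝ) δ₁, (capLen Ω θ x) ^ q / ENNReal.ofReal x)
      ≤ ∑' n : ℕ, capLen Ω θ (u n) ^ q := by
    calc ∫⁻ x in Ioo (0:ℝ) δ₁, (capLen Ω θ x) ^ q / ENNReal.ofReal x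
        ≤ ∫⁻ x in ⋃ n : ℕ, Ico (u (n+1)) (u n), (capLen Ω θ x) ^ q / ENNReal.ofReal x :=
          lintegral_mono_set hcover
      _ ≤ ∑' n : ℕ, ∫⁻ x in Ico (u (n+1)) (u n), (capLen Ω θ x) ^ q / ENNReal.ofReal x :=
          lintegral_iUnion_le _ _
      _ ≤ ∑' n : ℕ, capLen Ω θ (u n) ^ q := by
          apply ENNReal.tsum_le_tsum
          intro n
          have hstep : ∀ x ∈ Ico (u (n+1)) (u n),
              (capLen Ω θ x) ^ q / ENNReal.ofReal x
                ≤ capLen Ω θ (u n) ^ q / ENNReal.ofReal (u (n+1)) := by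
            intro x hx
            apply ENNReal.div_le_div
            · apply ENNReal.rpow_le_rpow _ hq0.le
              exact max_le_max (measure_mono (hcapmono _ _ _ hx.2.le))
                (measure_mono (hcapmono _ _ _ hx.2.le))
            · exact ENNReal.ofReal_le_ofReal hx.1
          calc ∫⁻ x in Ico (u (n+1)) (u n), (capLen Ω θ x)^q / ENNReal.ofReal x
              ≤ ∫⁻ _ in Ico (u (n+1)) (u n),
                  capLen Ω θ (u n) ^ q / ENNReal.ofReal (u (n+1)) :=
                setLIntegral_mono measurable_const hstep
            _ = (capLen Ω θ (u n) ^ q / ENNReal.ofReal (u (n+1)))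
                  * volume (Ico (u (n+1)) (u n)) := setLIntegral_const _ _
            _ = capLen Ω θ (u n) ^ q := by
                rw [Real.volume_Ico, hu_succ n]
                apply ENNReal.div_mul_cancel
                · simp only [ne_eq, ENNReal.ofReal_eq_zero, not_le]
                  exact hu0 (n+1)
                · exact ENNReal.ofReal_ne_top
  have hθneg : ‖-θ‖ = 1 := by rw [norm_neg, hθ]
  have hsplit : ∑' n : ℕ, capLen Ω θ (u n) ^ q
      ≤ (∑' n : ℕ, σ (capPlus Ω θ (u n)) ^ q) + ∑' n : ℕ, σ (capPlus Ω (-θ) (u n)) ^ q := by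
    rw [← ENNReal.tsum_add]
    apply ENNReal.tsum_le_tsum
    intro n
    rw [capLen]
    rcases max_cases (bdyMeasure Ω (capPlus Ω θ (u n))) (bdyMeasure Ω (capPlus Ω (-θ) (u n)))
      with ⟨hm, _⟩ | ⟨hm, _⟩
    · rw [hm]
      exact le_add_right le_rfl
    · rw [hm]
      exact le_add_left le_rfl
  have htotal : (∫⁻ x in Ioo (0:ℝ) δ₁, (capLen Ω θ x) ^ q / ENNReal.ofReal x)
      ≤ ENNReal.ofReal 128 * ENNReal.ofReal B ^ q := by
    have h1 := le_trans hint (le_trans hsplit (add_le_add (hkey θ hθ) (hkey _ hθneg)))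
    have h2 : A + A = ENNReal.ofReal 128 * ENNReal.ofReal B ^ q := by
      rw [hAdef, ← two_mul, ← mul_assoc,
        show (2:ℝ≥0∞) * ENNReal.ofReal 64 = ENNReal.ofReal 128 by
          rw [show (2:ℝ≥0∞) = ENNReal.ofReal 2 by norm_num,
            ← ENNReal.ofReal_mul (by norm_num : (0:ℝ) ≤ 2)]
          norm_num]
    rwa [h2] at h1
  have h3 : (∫⁻ x in Ioo (0:ℝ) δ₁, (capLen Ω θ x) ^ q / ENNReal.ofReal x) ^ (1/q)
      ≤ (ENNReal.ofReal 128 * ENNReal.ofReal B ^ q) ^ (1/q) :=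
    ENNReal.rpow_le_rpow htotal (by positivity)
  calc (∫⁻ x in Ioo (0:ℝ) δ₁, (capLen Ω θ x) ^ q / ENNReal.ofReal x) ^ (1/q)
      ≤ (ENNReal.ofReal 128 * ENNReal.ofReal B ^ q) ^ (1/q) := h3
    _ = ENNReal.ofReal 128 ^ (1/q) * ENNReal.ofReal B := by
        rw [ENNReal.mul_rpow_of_nonneg _ _ (by positivity : (0:ℝ) ≤ 1/q),
          ← ENNReal.rpow_mul, show q * (1/q) = 1 by field_simp, ENNReal.rpow_one]
    _ ≤ ENNReal.ofReal 128 * ENNReal.ofReal B := by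
        apply mul_le_mul_left
        calc ENNReal.ofReal 128 ^ (1/q) ≤ ENNReal.ofReal 128 ^ (1:ℝ) := by
              apply ENNReal.rpow_le_rpow_of_exponent_le
              · rw [show (1:ℝ≥0∞) = ENNReal.ofReal 1 by norm_num]
                exact ENNReal.ofReal_le_ofReal (by norm_num)
              · rw [div_le_one hq0]
                exact hq1
          _ = ENNReal.ofReal 128 := ENNReal.rpow_one _
    _ = ENNReal.ofReal ((1/128:ℝ)⁻¹ * B) := by
        rw [← ENNReal.ofReal_mul (by norm_num : (0:ℝ) ≤ 128)]
        norm_num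

end AuxForStmt1
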